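/- Let p be a prime, n divide p^{dm}+1 for positive integers d, m, and let F_p(η) be the degree-d extension of F_p. Suppose X^n - 1 = g(X) · ∏_{i=0}^{d-1} σ^i(h) over F_p(η), where g ∈ F_p[X] and h ∈ F_p(η)[X], and all factors g, σ^i(h) are pairwise coprime. Fix nonzero α ∈ F_p and let a ∈ F_p(η)[X]/(X^n-1) be defined by Chinese remaindering: a ≡ 1 (mod g) and a ≡ σ^i(αη) (mod σ^i(h)) for 0 ≤ i < d. Then σ(a) = a, i.e., a has all coefficients in F_p. -/

import Mathlib

open Polynomial

theorem stmt_16 (p d m n : ℕ) (hp : p.Prime) [Fact p.Prime]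
    (hd : 0 < d) (hm : 0 < m) (hn : 0 < n) (hdvd : n ∣ p ^ (d * m) + 1)
    (η : GaloisField p d) (hη : Algebra.adjoin (ZMod p) {η} = ⊤)
    (g : Polynomial (ZMod p)) (h : Polynomial (GaloisField p d))
    (hfact : (X : Polynomial (GaloisField p d)) ^ n - 1 =
      g.map (algebraMap (ZMod p) (GaloisField p d)) *
        ∏ i ∈ Finset.range d,
          (fun q : Polynomial (GaloisField p d) =>
            q.map (frobenius (GaloisField p d) p))^[i] h)
    (hcopg : ∀ i < d, IsCoprime (g.map (algebraMap (ZMod p) (GaloisField p d)))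
      ((fun q : Polynomial (GaloisField p d) =>
        q.map (frobenius (GaloisField p d) p))^[i] h))
    (hcoph : ∀ i < d, ∀ j < d, i ≠ j →
      IsCoprime ((fun q : Polynomial (GaloisField p d) =>
          q.map (frobenius (GaloisField p d) p))^[i] h)
        ((fun q : Polynomial (GaloisField p d) =>
          q.map (frobenius (GaloisField p d) p))^[j] h))
    (α : ZMod p) (hα : α ≠ 0)
    (a : Polynomial (GaloisField p d))
    (ha1 : g.map (algebraMap (ZMod p) (GaloisField p d)) ∣ (a - 1))
    (ha2 : ∀ i < d,
      (fun q : Polynomial (GaloisField p d) =>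
        q.map (frobenius (GaloisField p d) p))^[i] h ∣
          (a - Polynomial.C ((algebraMap (ZMod p) (GaloisField p d) α * η) ^ p ^ i))) :
    (X : Polynomial (GaloisField p d)) ^ n - 1 ∣
      (a.map (frobenius (GaloisField p d) p) - a) := by
  set σ := frobenius (GaloisField p d) p with hσ
  set F := fun q : Polynomial (GaloisField p d) => q.map σ with hF
  set β := algebraMap (ZMod p) (GaloisField p d) α * η with hβ
  -- coefficients of iterated map
  have hcoeff : ∀ (i : ℕ) (q : Polynomial (GaloisField p d)) (k : ℕ),
      (F^[i] q).coeff k = σ^[i] (q.coeff k) := by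
    intro i
    induction i with
    | zero => intro q k; simp
    | succ i ih =>
      intro q k
      rw [Function.iterate_succ_apply', Function.iterate_succ_apply']
      simp [hF, Polynomial.coeff_map, ih]
      exact congrArg σ (ih q k)
  haveI : Fintype (GaloisField p d) := Fintype.ofFinite _
  have hcard : Fintype.card (GaloisField p d) = p ^ d := by
    rw [← Nat.card_eq_fintype_card]; exact GaloisField.card p d hd.ne'
  have hpowd : ∀ x : GaloisField p d, x ^ p ^ d = x := by
    intro x
    rw [← hcard]
    exact FiniteField.pow_card x
  have hFd : ∀ q : Polynomial (GaloisField p d), F^[d] q = q := by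
    intro q
    ext k
    rw [hcoeff, iterate_frobenius, hpowd]
  -- one-step lemma
  have step : ∀ i : ℕ, F^[i] h ∣ a - Polynomial.C (β ^ p ^ i) →
      F^[i + 1] h ∣ a.map σ - Polynomial.C (β ^ p ^ (i + 1)) := by
    intro i hi
    have h1 := Polynomial.map_dvd σ hi
    rw [Function.iterate_succ_apply']
    have h2 : (a - Polynomial.C (β ^ p ^ i)).map σ =
        a.map σ - Polynomial.C (β ^ p ^ (i + 1)) := by
      rw [Polynomial.map_sub, Polynomial.map_C]
      congr 1
      rw [hσ, frobenius_def, ← pow_mul, ← pow_succ]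
    rw [h2] at h1
    exact h1
  -- each factor divides σ(a) - a
  have key : ∀ i < d, F^[i] h ∣ a.map σ - a := by
    intro i hi
    cases i with
    | zero =>
      have hd1 : d - 1 < d := Nat.sub_lt hd one_pos
      have h1 := step (d - 1) (ha2 (d - 1) hd1)
      rw [Nat.sub_add_cancel hd, hFd] at h1
      rw [hpowd] at h1
      have h0 := ha2 0 hd
      simp only [Function.iterate_zero, id_eq, pow_zero, pow_one] at h0 ⊢
      have := dvd_sub h1 h0
      rwa [sub_sub_sub_cancel_right] at this
    | succ j =>
      have h1 := step j (ha2 j (lt_of_le_of_lt (Nat.le_succ j) hi))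
      have h2 := ha2 (j + 1) hi
      have := dvd_sub h1 h2
      rwa [sub_sub_sub_cancel_right] at this
  -- g part
  have hg : g.map (algebraMap (ZMod p) (GaloisField p d)) ∣ a.map σ - a := by
    have h1 := Polynomial.map_dvd σ ha1
    rw [Polynomial.map_sub, Polynomial.map_one, Polynomial.map_map] at h1
    have hcomp : σ.comp (algebraMap (ZMod p) (GaloisField p d)) = algebraMap (ZMod p) (GaloisField p d) := by
      ext x
      simp [hσ, frobenius_def, ← map_pow, ZMod.pow_card]
    rw [hcomp] at h1
    have := dvd_sub h1 ha1
    rwa [sub_sub_sub_cancel_right] at this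
  rw [hfact]
  refine IsCoprime.mul_dvd ?_ hg ?_
  · exact IsCoprime.prod_right fun i hi => hcopg i (Finset.mem_range.mp hi)
  · refine Finset.prod_dvd_of_coprime ?_ fun i hi => key i (Finset.mem_range.mp hi)
    intro i hi j hj hij
    exact hcoph i (Finset.mem_range.mp hi) j (Finset.mem_range.mp hj) hij
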